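/- Let x* ∈ X be an optimal solution of min{ f(x) : g_k(x) ≤ 0 ∀k, x ∈ X }, let λ* ≥ 0 (componentwise) satisfy inf_{x ∈ X}( f(x) + Σ_k λ*_k g_k(x) ) = f(x*), and set D = β² + L_f + 2‖λ*‖‖L_g‖ + 2C‖L_g‖. If the step size γ > 0 satisfies D + ‖L_g‖·R/√γ − 1/γ ≤ 0, then for every t ≥ 1 the iterates of the algorithm satisfy Σ_{τ=0}^{t−1} f(x(τ)) ≤ t·f(x*) + R²/(2γ). -/

import Mathlib

set_option maxHeartbeats 1000000


open Filter Set intervalIntegral RealInnerProductSpace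

section AUXSEC
variable {E : Type*} [NormedAddCommGroup E] [InnerProductSpace ℝ E] [CompleteSpace E]


lemma slice_hasDerivAt {f : E → ℝ} {F : E → E}
    (hfd : ∀ z, HasGradientAt f (F z) z) (y v : E) (s : ℝ) :
    HasDerivAt (fun s : ℝ => f (y + s • v)) ⟪F (y + s • v), v⟫ s := by
  have hline : HasDerivAt (fun s : ℝ => y + s • v) v s := by
    simpa using ((hasDerivAt_id s).smul_const v).const_add y
  have hF := ((hfd (y + s • v)).hasFDerivAt).comp_hasDerivAt s hline
  simp [InnerProductSpace.toDual_apply_apply] at hF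
  exact hF

/-- Descent lemma on a convex set with gradient Lipschitz on the set. -/
lemma descent_lemma {X : Set E} (hXcv : Convex ℝ X) {f : E → ℝ} {F : E → E} {L : ℝ}
    (hfd : ∀ z, HasGradientAt f (F z) z) (hL : 0 ≤ L)
    (hLip : ∀ z ∈ X, ∀ w ∈ X, ‖F z - F w‖ ≤ L * ‖z - w‖)
    {y xx : E} (hy : y ∈ X) (hx : xx ∈ X) :
    f xx ≤ f y + ⟪F y, xx - y⟫ + L / 2 * ‖xx - y‖ ^ 2 := by
  set v := xx - y with hv
  have hmem : ∀ s : ℝ, s ∈ Icc (0:ℝ) 1 → y + s • v ∈ X := by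
    intro s hs
    have h := hXcv hy hx (sub_nonneg.2 hs.2) hs.1 (by ring)
    have e : (1 - s) • y + s • xx = y + s • v := by
      rw [hv]; module
    rwa [e] at h
  have hcont : ContinuousOn (fun s : ℝ => ⟪F (y + s • v), v⟫) (Icc 0 1) := by
    apply LipschitzOnWith.continuousOn (K := Real.toNNReal (L * ‖v‖ * ‖v‖))
    rw [lipschitzOnWith_iff_dist_le_mul]
    intro s hs t ht
    have h1 : ‖F (y + s • v) - F (y + t • v)‖ ≤ L * ‖(s - t) • v‖ := by
      have := hLip _ (hmem s hs) _ (hmem t ht)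
      simpa [sub_smul, add_sub_add_left_eq_sub] using this
    have h2 : dist (⟪F (y + s • v), v⟫) (⟪F (y + t • v), v⟫)
        = |⟪F (y + s • v) - F (y + t • v), v⟫| := by
      rw [Real.dist_eq, inner_sub_left]
    rw [h2]
    calc |⟪F (y + s • v) - F (y + t • v), v⟫|
        ≤ ‖F (y + s • v) - F (y + t • v)‖ * ‖v‖ := abs_real_inner_le_norm _ _
      _ ≤ (L * ‖(s - t) • v‖) * ‖v‖ := by
          apply mul_le_mul_of_nonneg_right h1 (norm_nonneg _)
      _ = (L * ‖v‖ * ‖v‖) * |s - t| := by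
          rw [norm_smul]; simp only [Real.norm_eq_abs]; ring
      _ = ↑(Real.toNNReal (L * ‖v‖ * ‖v‖)) * dist s t := by
          rw [Real.coe_toNNReal _ (by positivity), Real.dist_eq]
  have hcont' : ContinuousOn (fun s : ℝ => ⟪F (y + s • v), v⟫) (uIcc (0:ℝ) 1) := by
    rwa [uIcc_of_le (by norm_num : (0:ℝ) ≤ 1)]
  have hInt : IntervalIntegrable (fun s : ℝ => ⟪F (y + s • v), v⟫) MeasureTheory.volume 0 1 := hcont'.intervalIntegrable
  have hftc : f xx - f y = ∫ s in (0:ℝ)..1, ⟪F (y + s • v), v⟫ := by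
    have h := intervalIntegral.integral_eq_sub_of_hasDerivAt (a := (0:ℝ)) (b := 1)
      (f := fun s : ℝ => f (y + s • v)) (fun s _ => slice_hasDerivAt hfd y v s) hInt
    simp only [one_smul, zero_smul, add_zero] at h
    rw [show y + v = xx by rw [hv]; abel] at h
    exact h.symm
  have hbound : ∫ s in (0:ℝ)..1, ⟪F (y + s • v), v⟫
      ≤ ∫ s in (0:ℝ)..1, (⟪F y, v⟫ + L * s * ‖v‖ ^ 2) := by
    apply intervalIntegral.integral_mono_on (by norm_num) hInt
    · apply Continuous.intervalIntegrable; continuity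
    · intro s hs
      have h1 : ⟪F (y + s • v) - F y, v⟫ ≤ L * s * ‖v‖ ^ 2 := by
        calc ⟪F (y + s • v) - F y, v⟫ ≤ ‖F (y + s • v) - F y‖ * ‖v‖ :=
              real_inner_le_norm _ _
          _ ≤ (L * ‖s • v‖) * ‖v‖ := by
              apply mul_le_mul_of_nonneg_right ?_ (norm_nonneg _)
              have h3 := hLip _ (hmem s hs) _ hy
              rwa [show y + s • v - y = s • v by abel] at h3
          _ = L * (|s| * ‖v‖) * ‖v‖ := by rw [norm_smul]; simp [Real.norm_eq_abs]
          _ = L * s * ‖v‖ ^ 2 := by rw [abs_of_nonneg hs.1]; ring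
      have h2 : ⟪F (y + s • v), v⟫ - ⟪F y, v⟫ ≤ L * s * ‖v‖ ^ 2 := by
        rw [← inner_sub_left]; exact h1
      linarith
  have hint : ∫ s in (0:ℝ)..1, (⟪F y, v⟫ + L * s * ‖v‖ ^ 2)
      = ⟪F y, v⟫ + L / 2 * ‖v‖ ^ 2 := by
    have e : (fun s : ℝ => ⟪F y, v⟫ + L * s * ‖v‖ ^ 2)
        = fun s : ℝ => ⟪F y, v⟫ + (L * ‖v‖ ^ 2) * s := by funext s; ring
    rw [e, intervalIntegral.integral_add (by apply Continuous.intervalIntegrable; continuity)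
      (by apply Continuous.intervalIntegrable; continuity),
      intervalIntegral.integral_const, intervalIntegral.integral_const_mul, integral_id]
    norm_num; ring
  have : f xx - f y ≤ ⟪F y, v⟫ + L / 2 * ‖v‖ ^ 2 := by
    rw [hftc]; rw [hint] at hbound; exact hbound
  linarith

lemma proj_vi {X : Set E} (hXcv : Convex ℝ X) {p xp : E} (hxp : xp ∈ X)
    (hmin : ∀ z ∈ X, ‖xp - p‖ ≤ ‖z - p‖) {z : E} (hz : z ∈ X) :
    ⟪p - xp, z - xp⟫ ≤ 0 := by
  haveI : Nonempty ↑X := ⟨⟨xp, hxp⟩⟩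
  have hbdd : BddBelow (Set.range fun w : X => ‖p - ↑w‖) := by
    refine ⟨0, ?_⟩; rintro _ ⟨w, rfl⟩; exact norm_nonneg _
  have heq : ‖p - xp‖ = ⨅ w : X, ‖p - w‖ := by
    apply le_antisymm
    · apply le_ciInf; intro w
      rw [norm_sub_rev p xp, norm_sub_rev p w]; exact hmin w w.2
    · exact ciInf_le hbdd ⟨xp, hxp⟩
  exact (norm_eq_iInf_iff_real_inner_le_zero hXcv hxp).1 heq z hz

lemma prox_ineq {X : Set E} (hXcv : Convex ℝ X) {γ : ℝ} (hγ : 0 < γ) {y dv xp : E}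
    (hxp : xp ∈ X)
    (hmin : ∀ z ∈ X, ‖xp - (y - γ • dv)‖ ≤ ‖z - (y - γ • dv)‖)
    {z : E} (hz : z ∈ X) :
    2*γ*⟪dv, xp - y⟫ + ‖xp - y‖^2 ≤ 2*γ*⟪dv, z - y⟫ + ‖z - y‖^2 - ‖z - xp‖^2 := by
  have hvi : ⟪(y - γ • dv) - xp, z - xp⟫ ≤ 0 := proj_vi hXcv hxp hmin hz
  have h1 : ⟪y - xp, z - xp⟫ - γ*⟪dv, z - xp⟫ ≤ 0 := by
    have e : ⟪(y - γ • dv) - xp, z - xp⟫ = ⟪y - xp, z - xp⟫ - γ*⟪dv, z - xp⟫ := by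
      rw [show (y - γ • dv) - xp = (y - xp) - γ • dv by abel, inner_sub_left,
        real_inner_smul_left]
    rw [e] at hvi; exact hvi
  have h2 : ‖z - y‖^2 = ‖z - xp‖^2 + 2*⟪z - xp, xp - y⟫ + ‖xp - y‖^2 := by
    rw [show z - y = (z - xp) + (xp - y) by abel]
    rw [@norm_add_sq_real]
  have h3 : γ*⟪dv, z - y⟫ = γ*⟪dv, z - xp⟫ + γ*⟪dv, xp - y⟫ := by
    rw [show z - y = (z - xp) + (xp - y) by abel, inner_add_right]; ring
  have h4 : ⟪z - xp, xp - y⟫ = - ⟪y - xp, z - xp⟫ := by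
    rw [real_inner_comm, show y - xp = -(xp - y) by abel, inner_neg_left, neg_neg]
  linarith

lemma grad_convex_ineq {X : Set E} {f : E → ℝ} {F : E → E}
    (hf : ConvexOn ℝ X f) (hfd : ∀ z, HasGradientAt f (F z) z)
    {y z : E} (hy : y ∈ X) (hz : z ∈ X) :
    f y + ⟪F y, z - y⟫ ≤ f z := by
  set v := z - y with hv
  set φ := fun s : ℝ => f (y + s • v) with hφ
  have hder : HasDerivAt φ ⟪F y, v⟫ 0 := by
    simpa using slice_hasDerivAt hfd y v 0
  have hslope : ∀ s : ℝ, s ∈ Set.Ioo (0:ℝ) 1 → slope φ 0 s ≤ f z - f y := by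
    intro s hs
    have hcx := hf.2 hy hz (by linarith [hs.2] : (0:ℝ) ≤ 1 - s) (le_of_lt hs.1) (by ring)
    have e : (1 - s) • y + s • z = y + s • v := by rw [hv]; module
    rw [e] at hcx
    have hφ0 : φ 0 = f y := by simp [hφ]
    have hφs : φ s ≤ (1 - s) * f y + s * f z := by simpa [hφ, smul_eq_mul] using hcx
    rw [slope_def_field, sub_zero, div_le_iff₀ hs.1]
    have : φ s - φ 0 ≤ s * (f z - f y) := by rw [hφ0]; linarith
    linarith
  have htend : Filter.Tendsto (slope φ 0) (nhdsWithin 0 (Set.Ioi 0)) (nhds ⟪F y, v⟫) := by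
    have h := hasDerivAt_iff_tendsto_slope.1 hder
    exact h.mono_left (nhdsWithin_mono 0 (fun a ha => ne_of_gt ha))
  have hle : ⟪F y, v⟫ ≤ f z - f y := by
    refine le_of_tendsto htend ?_
    filter_upwards [Ioo_mem_nhdsGT_of_mem (Set.left_mem_Ico.2 one_pos)] with s hs
    exact hslope s hs
  linarith

end AUXSEC

set_option maxHeartbeats 1000000


/-- The stacked constraint vector `g(x) = (g_1(x), …, g_m(x))` as an element of
Euclidean space `ℝ^m`. -/
noncomputable def gvec {n m : ℕ} (g : Fin m → EuclideanSpace ℝ (Fin n) → ℝ)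
    (x : EuclideanSpace ℝ (Fin n)) : EuclideanSpace ℝ (Fin m) :=
  WithLp.toLp 2 (fun k => g k x)

/-- Partial-sum objective bound.
Indexing convention: `x 0` denotes the initial point `x(−1)` and `x (t+1)`
denotes the iterate `x(t)`; thus at iteration `t` of the paper,
`x(t) = x (t+1)`, `x(t−1) = x t`, and `Q(t) = Q t`. -/
theorem objective_partial_sum_bound {n m : ℕ}
    (X : Set (EuclideanSpace ℝ (Fin n)))
    (hXne : X.Nonempty) (hXcv : Convex ℝ X) (hXcp : IsCompact X)
    (R : ℝ) (hR : ∀ z ∈ X, ∀ w ∈ X, ‖z - w‖ ≤ R)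
    (f : EuclideanSpace ℝ (Fin n) → ℝ)
    (Gf : EuclideanSpace ℝ (Fin n) → EuclideanSpace ℝ (Fin n))
    (g : Fin m → EuclideanSpace ℝ (Fin n) → ℝ)
    (Gg : Fin m → EuclideanSpace ℝ (Fin n) → EuclideanSpace ℝ (Fin n))
    (Lf : ℝ) (Lg : EuclideanSpace ℝ (Fin m)) (β C : ℝ)
    (hf : ConvexOn ℝ X f)
    (hfd : ∀ z, HasGradientAt f (Gf z) z)
    (hLf : 0 ≤ Lf)
    (hGfLip : ∀ z ∈ X, ∀ w ∈ X, ‖Gf z - Gf w‖ ≤ Lf * ‖z - w‖)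
    (hg : ∀ k, ConvexOn ℝ X (g k))
    (hgd : ∀ (k : Fin m) z, HasGradientAt (g k) (Gg k z) z)
    (hLg : ∀ k, 0 ≤ Lg k)
    (hGgLip : ∀ (k : Fin m), ∀ z ∈ X, ∀ w ∈ X, ‖Gg k z - Gg k w‖ ≤ Lg k * ‖z - w‖)
    (hgLip : ∀ z ∈ X, ∀ w ∈ X, ‖gvec g z - gvec g w‖ ≤ β * ‖z - w‖)
    (hgC : ∀ z ∈ X, ‖gvec g z‖ ≤ C)
    (xstar : EuclideanSpace ℝ (Fin n)) (hxs : xstar ∈ X)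
    (hxsFeas : ∀ k, g k xstar ≤ 0)
    (hxsOpt : ∀ z ∈ X, (∀ k, g k z ≤ 0) → f xstar ≤ f z)
    (lam : EuclideanSpace ℝ (Fin m)) (hlam : ∀ k, 0 ≤ lam k)
    (hduality : IsGLB ((fun z => f z + ∑ k, lam k * g k z) '' X) (f xstar))
    (D : ℝ) (hD : D = β ^ 2 + Lf + 2 * ‖lam‖ * ‖Lg‖ + 2 * C * ‖Lg‖)
    (γ : ℝ) (hγ : 0 < γ)
    (hγcond : D + ‖Lg‖ * R / Real.sqrt γ - 1 / γ ≤ 0)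
    (x : ℕ → EuclideanSpace ℝ (Fin n)) (hxX : ∀ t, x t ∈ X)
    (Q : ℕ → EuclideanSpace ℝ (Fin m))
    (hQ0 : ∀ k, Q 0 k = max 0 (-(g k (x 0))))
    (hQr : ∀ (t : ℕ) (k : Fin m),
      Q (t + 1) k = max (-(g k (x (t + 1)))) (Q t k + g k (x (t + 1))))
    (d : ℕ → EuclideanSpace ℝ (Fin n))
    (hd : ∀ t, d t = Gf (x t) + ∑ k, (Q t k + g k (x t)) • Gg k (x t))
    (hproj : ∀ t, ∀ y ∈ X,
      ‖x (t + 1) - (x t - γ • d t)‖ ≤ ‖y - (x t - γ • d t)‖) :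
    ∀ t : ℕ, 1 ≤ t →
      ∑ τ ∈ Finset.range t, f (x (τ + 1)) ≤ (t : ℝ) * f xstar + R ^ 2 / (2 * γ) := by
  have hRnn : 0 ≤ R := le_trans (norm_nonneg (xstar - xstar)) (hR xstar hxs xstar hxs)
  have hCnn : 0 ≤ C := le_trans (norm_nonneg _) (hgC xstar hxs)
  have hsγ : 0 < Real.sqrt γ := Real.sqrt_pos.2 hγ
  set B : ℝ := 2*‖lam‖ + C + R / Real.sqrt γ with hB
  have hnorm2 : ∀ v : EuclideanSpace ℝ (Fin m), ‖v‖^2 = ∑ k, (v k)^2 := by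
    intro v
    rw [EuclideanSpace.norm_eq, Real.sq_sqrt (Finset.sum_nonneg fun k _ => sq_nonneg _)]
    exact Finset.sum_congr rfl fun k _ => by rw [Real.norm_eq_abs, sq_abs]
  have hinner : ∀ v u : EuclideanSpace ℝ (Fin m), (⟪v, u⟫ : ℝ) = ∑ k, v k * u k := by
    intro v u
    rw [PiLp.inner_apply]
    exact Finset.sum_congr rfl fun k _ => by rw [RCLike.inner_apply, conj_trivial, mul_comm]
  have hQnn : ∀ t k, 0 ≤ Q t k := by
    intro t
    induction t with
    | zero => intro k; rw [hQ0]; exact le_max_left _ _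
    | succ s ih =>
      intro k
      rw [hQr]
      rcases le_total 0 (g k (x (s+1))) with h | h
      · exact le_trans (by linarith [ih k]) (le_max_right _ _)
      · exact le_trans (by linarith) (le_max_left _ _)
  have hwnn : ∀ t k, 0 ≤ Q t k + g k (x t) := by
    intro t k
    cases t with
    | zero => have := le_max_right (0:ℝ) (-(g k (x 0))); rw [← hQ0 k] at this; linarith
    | succ s => have := le_max_left (-(g k (x (s+1)))) (Q s k + g k (x (s+1)))
                rw [← hQr s k] at this; linarith
  have hQge : ∀ t k, Q t k + g k (x (t+1)) ≤ Q (t+1) k := by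
    intro t k; rw [hQr]; exact le_max_right _ _
  have habs : ∀ t k, |g k (x (t+1))| ≤ Q (t+1) k := by
    intro t k
    rcases abs_cases (g k (x (t+1))) with ⟨h, _⟩ | ⟨h, _⟩ <;> rw [h]
    · linarith [hQge t k, hQnn t k]
    · rw [hQr]; exact le_max_left _ _
  have hgsq : ∀ s, ‖gvec g (x (s+1))‖^2 ≤ ‖Q (s+1)‖^2 := by
    intro s; rw [hnorm2, hnorm2]
    apply Finset.sum_le_sum; intro k _
    show (g k (x (s+1)))^2 ≤ (Q (s+1) k)^2
    nlinarith [habs s k, abs_nonneg (g k (x (s+1))), sq_abs (g k (x (s+1)))]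
  have hQ0sq : ‖Q 0‖^2 ≤ ‖gvec g (x 0)‖^2 := by
    rw [hnorm2, hnorm2]
    apply Finset.sum_le_sum; intro k _
    show (Q 0 k)^2 ≤ (g k (x 0))^2
    rw [hQ0]
    rcases max_choice (0:ℝ) (-(g k (x 0))) with h | h <;> rw [h]
    · simpa using sq_nonneg (g k (x 0))
    · rw [neg_sq]
  have hgC2 : ∀ z, z ∈ X → ‖gvec g z‖^2 ≤ C^2 := by
    intro z hz; nlinarith [hgC z hz, norm_nonneg (gvec g z)]
  have key : ∀ τ : ℕ, ‖Q τ‖ ≤ B →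
      2*γ*(f (x (τ+1))) + γ*(‖Q (τ+1)‖^2 - ‖Q τ‖^2)
        + γ*(‖gvec g (x τ)‖^2 - ‖gvec g (x (τ+1))‖^2)
      ≤ 2*γ*(f xstar) + (‖xstar - x τ‖^2 - ‖xstar - x (τ+1)‖^2) := by
    intro τ hQB
    have hy : x τ ∈ X := hxX τ
    have hx' : x (τ+1) ∈ X := hxX (τ+1)
    have hs2 : (0:ℝ) ≤ ‖x (τ+1) - x τ‖^2 := sq_nonneg _
    have A1 : f (x (τ+1)) ≤ f (x τ) + ⟪Gf (x τ), x (τ+1) - x τ⟫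
        + Lf/2*‖x (τ+1) - x τ‖^2 := descent_lemma hXcv hfd hLf hGfLip hy hx'
    have Ak : ∀ k, g k (x (τ+1)) ≤ g k (x τ) + ⟪Gg k (x τ), x (τ+1) - x τ⟫
        + (Lg k)/2*‖x (τ+1) - x τ‖^2 :=
      fun k => descent_lemma hXcv (hgd k) (hLg k) (hGgLip k) hy hx'
    have C1 : f (x τ) + ⟪Gf (x τ), xstar - x τ⟫ ≤ f xstar :=
      grad_convex_ineq hf hfd hy hxs
    have C2 : ∀ k, g k (x τ) + ⟪Gg k (x τ), xstar - x τ⟫ ≤ g k xstar :=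
      fun k => grad_convex_ineq (hg k) (hgd k) hy hxs
    have B' := prox_ineq hXcv hγ hx' (hproj τ) hxs
    have hdin : ∀ u : EuclideanSpace ℝ (Fin n), ⟪d τ, u⟫
        = ⟪Gf (x τ), u⟫ + ∑ k, (Q τ k + g k (x τ)) * ⟪Gg k (x τ), u⟫ := by
      intro u
      rw [hd τ, inner_add_left, sum_inner]
      congr 1
      exact Finset.sum_congr rfl fun k _ => real_inner_smul_left _ _ _
    rw [hdin (x (τ+1) - x τ), hdin (xstar - x τ)] at B'
    have E1 : ∑ k, (Q τ k + g k (x τ)) * g k (x (τ+1))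
        ≤ (∑ k, (Q τ k + g k (x τ)) * g k (x τ))
          + (∑ k, (Q τ k + g k (x τ)) * ⟪Gg k (x τ), x (τ+1) - x τ⟫)
          + (∑ k, (Q τ k + g k (x τ)) * Lg k) * (‖x (τ+1) - x τ‖^2/2) := by
      calc ∑ k, (Q τ k + g k (x τ)) * g k (x (τ+1))
          ≤ ∑ k, (Q τ k + g k (x τ)) * (g k (x τ) + ⟪Gg k (x τ), x (τ+1) - x τ⟫
              + (Lg k)/2*‖x (τ+1) - x τ‖^2) :=
            Finset.sum_le_sum fun k _ => mul_le_mul_of_nonneg_left (Ak k) (hwnn τ k)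
        _ = _ := by
            rw [Finset.sum_mul, ← Finset.sum_add_distrib, ← Finset.sum_add_distrib]
            exact Finset.sum_congr rfl fun k _ => by ring
    have E2 : (∑ k, (Q τ k + g k (x τ)) * g k (x τ))
        + (∑ k, (Q τ k + g k (x τ)) * ⟪Gg k (x τ), xstar - x τ⟫) ≤ 0 := by
      calc (∑ k, (Q τ k + g k (x τ)) * g k (x τ))
            + (∑ k, (Q τ k + g k (x τ)) * ⟪Gg k (x τ), xstar - x τ⟫)
          = ∑ k, (Q τ k + g k (x τ)) * (g k (x τ) + ⟪Gg k (x τ), xstar - x τ⟫) := by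
            rw [← Finset.sum_add_distrib]
            exact Finset.sum_congr rfl fun k _ => by ring
        _ ≤ ∑ k, (Q τ k + g k (x τ)) * g k xstar :=
            Finset.sum_le_sum fun k _ => mul_le_mul_of_nonneg_left (C2 k) (hwnn τ k)
        _ ≤ 0 := Finset.sum_nonpos fun k _ =>
            mul_nonpos_iff.2 (Or.inl ⟨hwnn τ k, hxsFeas k⟩)
    have E4 : ‖Q (τ+1)‖^2 ≤ ‖Q τ‖^2 + 2*(∑ k, Q τ k * g k (x (τ+1)))
        + 2*(∑ k, (g k (x (τ+1)))^2) := by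
      rw [hnorm2, hnorm2]
      calc ∑ k, (Q (τ+1) k)^2
          ≤ ∑ k, ((Q τ k)^2 + 2*(Q τ k * g k (x (τ+1))) + 2*(g k (x (τ+1)))^2) := by
            apply Finset.sum_le_sum; intro k _
            rw [hQr τ k]
            rcases max_choice (-(g k (x (τ+1)))) (Q τ k + g k (x (τ+1))) with h | h <;>
              rw [h] <;> nlinarith [hQnn τ k, sq_nonneg (Q τ k + g k (x (τ+1)))]
        _ = _ := by
            rw [Finset.sum_add_distrib, Finset.sum_add_distrib, ← Finset.mul_sum,
              ← Finset.mul_sum]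
    have hGx2 : ‖gvec g (x (τ+1))‖^2 = ∑ k, (g k (x (τ+1)))^2 := by
      rw [hnorm2]; rfl
    have E5 : ‖gvec g (x (τ+1))‖^2 - 2*(∑ k, g k (x τ) * g k (x (τ+1)))
        + ‖gvec g (x τ)‖^2 ≤ β^2*‖x (τ+1) - x τ‖^2 := by
      have h := hgLip (x (τ+1)) hx' (x τ) hy
      have h2 : ‖gvec g (x (τ+1)) - gvec g (x τ)‖^2 ≤ β^2*‖x (τ+1) - x τ‖^2 := by
        nlinarith [mul_self_le_mul_self (norm_nonneg (gvec g (x (τ+1)) - gvec g (x τ))) h]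
      have h3 : ‖gvec g (x (τ+1)) - gvec g (x τ)‖^2 = ‖gvec g (x (τ+1))‖^2
          - 2*⟪gvec g (x (τ+1)), gvec g (x τ)⟫ + ‖gvec g (x τ)‖^2 := by
        rw [@norm_sub_sq_real]
      have h4 : ⟪gvec g (x (τ+1)), gvec g (x τ)⟫ = ∑ k, g k (x τ) * g k (x (τ+1)) := by
        rw [hinner]; exact Finset.sum_congr rfl fun k _ => mul_comm _ _
      rw [h3, h4] at h2
      linarith
    have CS : ∑ k, (Q τ k + g k (x τ)) * Lg k ≤ (B + C)*‖Lg‖ := by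
      have h1 : ∑ k, (Q τ k + g k (x τ)) * Lg k = ⟪Q τ + gvec g (x τ), Lg⟫ := by
        rw [hinner]
        exact Finset.sum_congr rfl fun k _ => rfl
      have h2 : (⟪Q τ + gvec g (x τ), Lg⟫ : ℝ) ≤ ‖Q τ + gvec g (x τ)‖*‖Lg‖ :=
        real_inner_le_norm _ _
      have h3 : ‖Q τ + gvec g (x τ)‖ ≤ ‖Q τ‖ + ‖gvec g (x τ)‖ := norm_add_le _ _
      have h4 : ‖gvec g (x τ)‖ ≤ C := hgC _ hy
      have h5 : (0:ℝ) ≤ ‖Lg‖ := norm_nonneg _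
      nlinarith [mul_le_mul_of_nonneg_right h3 h5,
        mul_le_mul_of_nonneg_right (add_le_add hQB h4) h5]
    have hcoef : γ*(β^2 + Lf + ∑ k, (Q τ k + g k (x τ)) * Lg k) ≤ 1 := by
      have e : β^2 + Lf + (B+C)*‖Lg‖ = D + ‖Lg‖*R/Real.sqrt γ := by
        rw [hD, hB]; field_simp; ring
      have h1 : β^2 + Lf + ∑ k, (Q τ k + g k (x τ)) * Lg k ≤ 1/γ := by
        have h2 : (0:ℝ) ≤ ‖Lg‖ := norm_nonneg _
        calc β^2 + Lf + ∑ k, (Q τ k + g k (x τ)) * Lg k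
            ≤ β^2 + Lf + (B+C)*‖Lg‖ := by linarith [CS]
          _ = D + ‖Lg‖*R/Real.sqrt γ := e
          _ ≤ 1/γ := by linarith [hγcond]
      calc γ*(β^2 + Lf + ∑ k, (Q τ k + g k (x τ)) * Lg k) ≤ γ*(1/γ) :=
            mul_le_mul_of_nonneg_left h1 hγ.le
        _ = 1 := by field_simp
    have hterm : (γ*(β^2 + Lf + ∑ k, (Q τ k + g k (x τ)) * Lg k) - 1)
        * ‖x (τ+1) - x τ‖^2 ≤ 0 :=
      mul_nonpos_iff.2 (Or.inr ⟨by linarith, hs2⟩)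
    have hsplit : 2*γ*(∑ k, (Q τ k + g k (x τ)) * g k (x (τ+1)))
        = 2*γ*(∑ k, Q τ k * g k (x (τ+1))) + 2*γ*(∑ k, g k (x τ) * g k (x (τ+1))) := by
      rw [← mul_add, ← Finset.sum_add_distrib]
      congr 1
      exact Finset.sum_congr rfl fun k _ => by ring
    have A2 : 2*γ*(f (x (τ+1))) ≤ 2*γ*(f (x τ) + ⟪Gf (x τ), x (τ+1) - x τ⟫
        + Lf/2*‖x (τ+1) - x τ‖^2) := mul_le_mul_of_nonneg_left A1 (by positivity)
    have C1' : 2*γ*(f (x τ) + ⟪Gf (x τ), xstar - x τ⟫) ≤ 2*γ*(f xstar) :=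
      mul_le_mul_of_nonneg_left C1 (by positivity)
    have E1' : 2*γ*(∑ k, (Q τ k + g k (x τ)) * g k (x (τ+1)))
        ≤ 2*γ*((∑ k, (Q τ k + g k (x τ)) * g k (x τ))
          + (∑ k, (Q τ k + g k (x τ)) * ⟪Gg k (x τ), x (τ+1) - x τ⟫)
          + (∑ k, (Q τ k + g k (x τ)) * Lg k) * (‖x (τ+1) - x τ‖^2/2)) :=
      mul_le_mul_of_nonneg_left E1 (by positivity)
    have E2' : 2*γ*((∑ k, (Q τ k + g k (x τ)) * g k (x τ))
        + (∑ k, (Q τ k + g k (x τ)) * ⟪Gg k (x τ), xstar - x τ⟫)) ≤ 0 :=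
      mul_nonpos_iff.2 (Or.inl ⟨by positivity, E2⟩)
    have E4' : γ*‖Q (τ+1)‖^2 ≤ γ*(‖Q τ‖^2 + 2*(∑ k, Q τ k * g k (x (τ+1)))
        + 2*(∑ k, (g k (x (τ+1)))^2)) := mul_le_mul_of_nonneg_left E4 hγ.le
    have E5' : γ*(‖gvec g (x (τ+1))‖^2 - 2*(∑ k, g k (x τ) * g k (x (τ+1)))
        + ‖gvec g (x τ)‖^2) ≤ γ*(β^2*‖x (τ+1) - x τ‖^2) :=
      mul_le_mul_of_nonneg_left E5 hγ.le
    have hGx2' : γ*‖gvec g (x (τ+1))‖^2 = γ*(∑ k, (g k (x (τ+1)))^2) := by rw [hGx2]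
    linarith [A2, B', C1', E1', E2', E4', E5', hGx2', hsplit, hterm]
  have sums : ∀ t : ℕ, (∀ τ, τ < t → ‖Q τ‖ ≤ B) →
      2*γ*(∑ τ ∈ Finset.range t, f (x (τ+1))) + γ*(‖Q t‖^2 - ‖Q 0‖^2)
        + γ*(‖gvec g (x 0)‖^2 - ‖gvec g (x t)‖^2)
      ≤ 2*γ*((t:ℝ) * f xstar) + (‖xstar - x 0‖^2 - ‖xstar - x t‖^2) := by
    intro t
    induction t with
    | zero => intro _; simp
    | succ s ih =>
      intro h
      have h1 := ih (fun τ hτ => h τ (by omega))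
      have h2 := key s (h s (by omega))
      rw [Finset.sum_range_succ]
      push_cast
      linarith
  have tel : ∀ (t : ℕ) (k : Fin m), ∑ τ ∈ Finset.range t, g k (x (τ+1)) ≤ Q t k - Q 0 k := by
    intro t k
    induction t with
    | zero => simp
    | succ s ih => rw [Finset.sum_range_succ]; linarith [hQge s k]
  have qb : ∀ t, ‖Q t‖ ≤ B := by
    intro t
    induction t using Nat.strong_induction_on with
    | _ t ih =>
      have hCB : C ≤ B := by
        rw [hB]; have : 0 ≤ R / Real.sqrt γ := div_nonneg hRnn hsγ.le
        linarith [norm_nonneg lam]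
      cases t with
      | zero =>
        have h2 : ‖gvec g (x 0)‖ ≤ C := hgC _ (hxX 0)
        have h1 : ‖Q 0‖ ≤ C := by
          nlinarith [hQ0sq, norm_nonneg (Q 0), norm_nonneg (gvec g (x 0))]
        linarith
      | succ s =>
        have hsum := sums (s+1) (fun τ hτ => ih τ hτ)
        have hdual : (↑(s+1) : ℝ) * f xstar - ‖lam‖*‖Q (s+1)‖
            ≤ ∑ τ ∈ Finset.range (s+1), f (x (τ+1)) := by
          have h1 : ∀ τ : ℕ, f xstar - (∑ k, lam k * g k (x (τ+1))) ≤ f (x (τ+1)) := by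
            intro τ
            have h := hduality.1 ⟨x (τ+1), hxX (τ+1), rfl⟩
            simp only at h
            linarith
          have h2 : (↑(s+1):ℝ) * f xstar
              - ∑ τ ∈ Finset.range (s+1), (∑ k, lam k * g k (x (τ+1)))
              ≤ ∑ τ ∈ Finset.range (s+1), f (x (τ+1)) := by
            have h3 := Finset.sum_le_sum (s := Finset.range (s+1)) (fun τ _ => h1 τ)
            rw [Finset.sum_sub_distrib, Finset.sum_const, Finset.card_range, nsmul_eq_mul] at h3
            push_cast at h3 ⊢
            linarith
          have h3 : ∑ τ ∈ Finset.range (s+1), (∑ k, lam k * g k (x (τ+1)))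
              ≤ ‖lam‖*‖Q (s+1)‖ := by
            rw [Finset.sum_comm]
            have h4 : ∀ k, ∑ τ ∈ Finset.range (s+1), lam k * g k (x (τ+1))
                ≤ lam k * Q (s+1) k := by
              intro k
              rw [← Finset.mul_sum]
              have h5 := mul_le_mul_of_nonneg_left (tel (s+1) k) (hlam k)
              nlinarith [mul_nonneg (hlam k) (hQnn 0 k)]
            calc ∑ k, ∑ τ ∈ Finset.range (s+1), lam k * g k (x (τ+1))
                ≤ ∑ k, lam k * Q (s+1) k := Finset.sum_le_sum fun k _ => h4 k
              _ = ⟪lam, Q (s+1)⟫ := (hinner _ _).symm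
              _ ≤ ‖lam‖*‖Q (s+1)‖ := real_inner_le_norm _ _
          linarith
        have hdual' := mul_le_mul_of_nonneg_left hdual (by positivity : (0:ℝ) ≤ 2*γ)
        have hg1 : γ*‖Q 0‖^2 ≤ γ*‖gvec g (x 0)‖^2 :=
          mul_le_mul_of_nonneg_left hQ0sq hγ.le
        have hg2 : γ*‖gvec g (x (s+1))‖^2 ≤ γ*C^2 :=
          mul_le_mul_of_nonneg_left (hgC2 _ (hxX (s+1))) hγ.le
        have hg3 : ‖xstar - x 0‖^2 ≤ R^2 := by
          nlinarith [hR xstar hxs (x 0) (hxX 0), norm_nonneg (xstar - x 0)]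
        have hg4 : (0:ℝ) ≤ ‖xstar - x (s+1)‖^2 := sq_nonneg _
        have hq1 : γ*‖Q (s+1)‖^2 - 2*γ*(‖lam‖*‖Q (s+1)‖) - γ*C^2 ≤ R^2 := by linarith
        have hq2 : ‖Q (s+1)‖^2 - 2*‖lam‖*‖Q (s+1)‖ - C^2 ≤ R^2/γ := by
          rw [le_div_iff₀ hγ]; linarith [hq1]
        have hq3 : (‖Q (s+1)‖ - ‖lam‖)^2 ≤ ‖lam‖^2 + C^2 + R^2/γ := by nlinarith [hq2]
        have hq4 : ‖Q (s+1)‖ - ‖lam‖ ≤ Real.sqrt (‖lam‖^2 + C^2 + R^2/γ) := by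
          calc ‖Q (s+1)‖ - ‖lam‖ ≤ |‖Q (s+1)‖ - ‖lam‖| := le_abs_self _
            _ = Real.sqrt ((‖Q (s+1)‖ - ‖lam‖)^2) := (Real.sqrt_sq_eq_abs _).symm
            _ ≤ Real.sqrt (‖lam‖^2 + C^2 + R^2/γ) := Real.sqrt_le_sqrt hq3
        have hq5 : Real.sqrt (‖lam‖^2 + C^2 + R^2/γ) ≤ ‖lam‖ + C + R/Real.sqrt γ := by
          have hsq : (R/Real.sqrt γ)^2 = R^2/γ := by
            rw [div_pow, Real.sq_sqrt hγ.le]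
          have h6 : ‖lam‖^2 + C^2 + R^2/γ ≤ (‖lam‖ + C + R/Real.sqrt γ)^2 := by
            nlinarith [mul_nonneg (norm_nonneg lam) hCnn,
              mul_nonneg hCnn (div_nonneg hRnn hsγ.le),
              mul_nonneg (norm_nonneg lam) (div_nonneg hRnn hsγ.le)]
          calc Real.sqrt (‖lam‖^2 + C^2 + R^2/γ)
              ≤ Real.sqrt ((‖lam‖ + C + R/Real.sqrt γ)^2) := Real.sqrt_le_sqrt h6
            _ = ‖lam‖ + C + R/Real.sqrt γ := Real.sqrt_sq (by positivity)
        rw [hB]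
        linarith
  intro t ht
  have hsum := sums t (fun τ _ => qb τ)
  obtain ⟨s, rfl⟩ : ∃ s, t = s+1 := ⟨t-1, by omega⟩
  have h1 : γ*‖Q 0‖^2 ≤ γ*‖gvec g (x 0)‖^2 := mul_le_mul_of_nonneg_left hQ0sq hγ.le
  have h2 : γ*‖gvec g (x (s+1))‖^2 ≤ γ*‖Q (s+1)‖^2 :=
    mul_le_mul_of_nonneg_left (hgsq s) hγ.le
  have h3 : ‖xstar - x 0‖^2 ≤ R^2 := by
    nlinarith [hR xstar hxs (x 0) (hxX 0), norm_nonneg (xstar - x 0)]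
  have h4 : (0:ℝ) ≤ ‖xstar - x (s+1)‖^2 := sq_nonneg _
  have h5 : (0:ℝ) < 2*γ := by linarith
  have h6 : ∑ τ ∈ Finset.range (s+1), f (x (τ+1)) - (↑(s+1):ℝ) * f xstar
      ≤ R^2/(2*γ) := by
    rw [le_div_iff₀ h5]
    linarith
  linarith
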